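/- Let G be a graph of maximum degree at most 2 (every component is a path or a cycle), and let I_1, ..., I_{2n-1} be independent sets of size n in G. Then there exists a rainbow independent n-set. -/

import Mathlib

open SimpleGraph Finset

/-- `S` is an independent set in `G`. -/
def IndepIn {V : Type*} (G : SimpleGraph V) (S : Finset V) : Prop :=
  ∀ u ∈ S, ∀ v ∈ S, ¬ G.Adj u v

/-- The family `I` admits a rainbow independent `m`-set in `G`: `m` distinct pairwise
non-adjacent vertices, each chosen from a distinct member of the family. -/
def HasRainbowIndep {V ι : Type*} (G : SimpleGraph V) (I : ι → Finset V) (m : ℕ) : Prop :=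
  ∃ (j : Fin m → ι) (v : Fin m → V), Function.Injective j ∧ Function.Injective v ∧
    (∀ i, v i ∈ I (j i)) ∧ ∀ i i' : Fin m, i ≠ i' → ¬ G.Adj (v i) (v i')

/-- `G` contains no induced copy of `H`. -/
def IndFree {V W : Type*} (G : SimpleGraph V) (H : SimpleGraph W) : Prop :=
  ¬ ∃ f : W ↪ V, ∀ a b : W, G.Adj (f a) (f b) ↔ H.Adj a b

namespace RainbowAux

variable {V : Type*} [Fintype V] (G : SimpleGraph V) [DecidableRel G.Adj]

/-- An alternating path: `k` pairwise distinct, pairwise non-adjacent vertices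
`q 0, …, q (k-1)`, together with `k-1` midpoints `m 0, …, m (k-2)` where
`m t` is adjacent to `q t` and `q (t+1)`, all `2k-1` vertices distinct. -/
structure AltP (k : ℕ) (q m : ℕ → V) : Prop where
  qne : ∀ ⦃s⦄, s < k → ∀ ⦃t⦄, t < k → s ≠ t → q s ≠ q t
  qnadj : ∀ ⦃s⦄, s < k → ∀ ⦃t⦄, t < k → s ≠ t → ¬ G.Adj (q s) (q t)
  mne : ∀ ⦃s⦄, s < k - 1 → ∀ ⦃t⦄, t < k - 1 → s ≠ t → m s ≠ m t
  qm : ∀ ⦃s⦄, s < k → ∀ ⦃t⦄, t < k - 1 → q s ≠ m t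
  adj1 : ∀ ⦃t⦄, t < k - 1 → G.Adj (m t) (q t)
  adj2 : ∀ ⦃t⦄, t < k - 1 → G.Adj (m t) (q (t + 1))

/-- The endpoint-extension data for an alternating path. -/
structure Spec (k : ℕ) (q m : ℕ → V) (a b : V) : Prop where
  ha : G.Adj (q 0) a
  hb : G.Adj (q (k - 1)) b
  hab : a ≠ b
  ham : 1 < k → a ≠ m 0
  hbm : 1 < k → b ≠ m (k - 2)

open scoped Classical in
/-- Closed neighbourhood of the `q`-vertices. -/
noncomputable def Dset (k : ℕ) (q : ℕ → V) : Finset V :=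
  Finset.univ.filter (fun v => ∃ t, t < k ∧ (v = q t ∨ G.Adj (q t) v))

open scoped Classical

lemma mem_Dset {k : ℕ} {q : ℕ → V} {v : V} :
    v ∈ Dset G k q ↔ ∃ t, t < k ∧ (v = q t ∨ G.Adj (q t) v) := by
  simp [Dset]

/-- The extension of the x-vertices of a path by endpoints `a`, `b`:
the new sequence is `a, m 0, …, m (k-2), b`. -/
def ext (k : ℕ) (m : ℕ → V) (a b : V) : ℕ → V :=
  fun t => if t = 0 then a else if t < k then m (t - 1) else b

variable {G}

lemma two_nbrs (hdeg : ∀ v : V, G.degree v ≤ 2) {v a b c : V} (ha : G.Adj v a)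
    (hb : G.Adj v b) (hab : a ≠ b) (hc : G.Adj v c) : c = a ∨ c = b := by
  classical
  by_contra h
  push_neg at h
  have hsub : ({a, b, c} : Finset V) ⊆ G.neighborFinset v := by
    intro x hx
    simp only [Finset.mem_insert, Finset.mem_singleton] at hx
    rcases hx with rfl | rfl | rfl <;> simp [SimpleGraph.mem_neighborFinset, ha, hb, hc]
  have hcard : ({a, b, c} : Finset V).card = 3 :=
    Finset.card_eq_three.mpr ⟨a, b, c, hab, fun hh => h.1 hh.symm, fun hh => h.2 hh.symm, rfl⟩
  have := Finset.card_le_card hsub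
  rw [hcard] at this
  have := le_trans this (hdeg v)
  omega

namespace AltP

lemma mono {k j : ℕ} {q m : ℕ → V} (hp : AltP G k q m) (hjk : j ≤ k) : AltP G j q m := by
  have h1 : j - 1 ≤ k - 1 := by omega
  exact ⟨fun s hs t ht => hp.qne (lt_of_lt_of_le hs hjk) (lt_of_lt_of_le ht hjk),
    fun s hs t ht => hp.qnadj (lt_of_lt_of_le hs hjk) (lt_of_lt_of_le ht hjk),
    fun s hs t ht => hp.mne (lt_of_lt_of_le hs h1) (lt_of_lt_of_le ht h1),
    fun s hs t ht => hp.qm (lt_of_lt_of_le hs hjk) (lt_of_lt_of_le ht h1),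
    fun t ht => hp.adj1 (lt_of_lt_of_le ht h1),
    fun t ht => hp.adj2 (lt_of_lt_of_le ht h1)⟩

/-- The neighbours of a midpoint are exactly the two adjacent x-vertices. -/
lemma m_nbrs (hdeg : ∀ v : V, G.degree v ≤ 2) {k : ℕ} {q m : ℕ → V} (hp : AltP G k q m)
    {t : ℕ} (ht : t < k - 1) {c : V} (hc : G.Adj (m t) c) : c = q t ∨ c = q (t + 1) := by
  refine two_nbrs hdeg (hp.adj1 ht) (hp.adj2 ht) ?_ hc
  exact hp.qne (by omega) (by omega) (by omega)

/-- The neighbours of an interior x-vertex are exactly the two adjacent midpoints. -/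
lemma q_nbrs (hdeg : ∀ v : V, G.degree v ≤ 2) {k : ℕ} {q m : ℕ → V} (hp : AltP G k q m)
    {t : ℕ} (h1 : 1 ≤ t) (h2 : t < k - 1) {c : V} (hc : G.Adj (q t) c) :
    c = m (t - 1) ∨ c = m t := by
  have ha : G.Adj (q t) (m (t - 1)) := by
    have := hp.adj2 (t := t - 1) (by omega)
    rw [Nat.sub_add_cancel h1] at this
    exact this.symm
  have hb : G.Adj (q t) (m t) := (hp.adj1 h2).symm
  exact two_nbrs hdeg ha hb (hp.mne (by omega) (by omega) (by omega)) hc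

end AltP

/-- Extending an alternating path via endpoint data yields a longer alternating path
whose midpoints are the old x-vertices. -/
lemma ext_cases {k : ℕ} (hk : 1 ≤ k) (m : ℕ → V) (a b : V) {t : ℕ} (ht : t < k + 1) :
    (t = 0 ∧ ext k m a b t = a) ∨ (1 ≤ t ∧ t < k ∧ ext k m a b t = m (t - 1)) ∨
    (t = k ∧ ext k m a b t = b) := by
  rcases Nat.eq_zero_or_pos t with rfl | htpos
  · left; exact ⟨rfl, by simp [ext]⟩
  · by_cases h : t < k
    · right; left; exact ⟨htpos, h, by simp [ext, Nat.pos_iff_ne_zero.mp htpos, h]⟩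
    · right; right
      have heq : t = k := by omega
      refine ⟨heq, ?_⟩
      rw [heq]
      simp [ext, Nat.pos_iff_ne_zero.mp hk, Nat.lt_irrefl]

lemma ext_altp (hdeg : ∀ v : V, G.degree v ≤ 2) {k : ℕ} (hk : 1 ≤ k) {q m : ℕ → V}
    (hp : AltP G k q m) {a b : V} (hs : Spec G k q m a b) (hnadj : ¬ G.Adj a b) :
    AltP G (k + 1) (ext k m a b) q := by
  have haQ : ∀ t, t < k → a ≠ q t := by
    intro t ht heq
    rcases Nat.eq_zero_or_pos t with rfl | htpos
    · exact G.irrefl (heq ▸ hs.ha)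
    · exact hp.qnadj (show 0 < k by omega) ht (by omega) (heq ▸ hs.ha)
  have hbQ : ∀ t, t < k → b ≠ q t := by
    intro t ht heq
    by_cases h : t = k - 1
    · subst h; exact G.irrefl (heq ▸ hs.hb)
    · exact hp.qnadj (show k - 1 < k by omega) ht (by omega) (heq ▸ hs.hb)
  have haM : ∀ t, t < k - 1 → a ≠ m t := by
    intro t ht heq
    rcases Nat.eq_zero_or_pos t with rfl | htpos
    · exact hs.ham (by omega) heq
    · have hadj : G.Adj (m t) (q 0) := by rw [← heq]; exact hs.ha.symm
      rcases hp.m_nbrs hdeg ht hadj with h1 | h1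
      · exact hp.qne (show 0 < k by omega) (by omega) (by omega) h1
      · exact hp.qne (show 0 < k by omega) (by omega) (by omega) h1
  have hbM : ∀ t, t < k - 1 → b ≠ m t := by
    intro t ht heq
    by_cases h : t = k - 2
    · subst h; exact hs.hbm (by omega) heq
    · have hadj : G.Adj (m t) (q (k - 1)) := by rw [← heq]; exact hs.hb.symm
      rcases hp.m_nbrs hdeg ht hadj with h1 | h1
      · exact hp.qne (show k - 1 < k by omega) (by omega) (by omega) h1
      · exact hp.qne (show k - 1 < k by omega) (by omega) (by omega) h1
  have haMadj : ∀ t, t < k - 1 → ¬ G.Adj a (m t) := by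
    intro t ht hadj
    rcases hp.m_nbrs hdeg ht hadj.symm with h1 | h1
    · exact haQ t (by omega) h1
    · exact haQ (t + 1) (by omega) h1
  have hbMadj : ∀ t, t < k - 1 → ¬ G.Adj b (m t) := by
    intro t ht hadj
    rcases hp.m_nbrs hdeg ht hadj.symm with h1 | h1
    · exact hbQ t (by omega) h1
    · exact hbQ (t + 1) (by omega) h1
  have hMMadj : ∀ s t, s < k - 1 → t < k - 1 → ¬ G.Adj (m s) (m t) := by
    intro s t hsk htk hadj
    rcases hp.m_nbrs hdeg hsk hadj with h1 | h1
    · exact hp.qm (show s < k by omega) htk h1.symm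
    · exact hp.qm (show s + 1 < k by omega) htk h1.symm
  have hcase : ∀ t, t < k + 1 → (t = 0 ∧ ext k m a b t = a) ∨
      (1 ≤ t ∧ t < k ∧ ext k m a b t = m (t - 1)) ∨ (t = k ∧ ext k m a b t = b) :=
    fun t ht => ext_cases hk m a b ht
  constructor
  · -- qne
    intro s hs' t ht' hst
    rcases hcase s hs' with ⟨rfl, he⟩ | ⟨h1, h2, he⟩ | ⟨rfl, he⟩ <;>
      rcases hcase t ht' with ⟨rfl, he'⟩ | ⟨h1', h2', he'⟩ | ⟨rfl, he'⟩ <;>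
      simp only [he, he']
    · omega
    · exact haM (t - 1) (by omega)
    · exact hs.hab
    · exact fun hh => haM (s - 1) (by omega) hh.symm
    · exact hp.mne (by omega) (by omega) (by omega)
    · exact fun hh => hbM (s - 1) (by omega) hh.symm
    · exact fun hh => hs.hab hh.symm
    · exact hbM (t - 1) (by omega)
    · omega
  · -- qnadj
    intro s hs' t ht' hst
    rcases hcase s hs' with ⟨rfl, he⟩ | ⟨h1, h2, he⟩ | ⟨rfl, he⟩ <;>
      rcases hcase t ht' with ⟨rfl, he'⟩ | ⟨h1', h2', he'⟩ | ⟨rfl, he'⟩ <;>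
      simp only [he, he']
    · omega
    · exact haMadj (t - 1) (by omega)
    · exact hnadj
    · exact fun hh => haMadj (s - 1) (by omega) hh.symm
    · exact hMMadj (s - 1) (t - 1) (by omega) (by omega)
    · exact fun hh => hbMadj (s - 1) (by omega) hh.symm
    · exact fun hh => hnadj hh.symm
    · exact hbMadj (t - 1) (by omega)
    · omega
  · -- mne : midpoints are the old q
    intro s hs' t ht' hst
    exact hp.qne (by omega) (by omega) hst
  · -- qm : new x-vertices distinct from new midpoints (old q)
    intro s hs' t ht'
    rcases hcase s hs' with ⟨rfl, he⟩ | ⟨h1, h2, he⟩ | ⟨rfl, he⟩ <;> rw [he]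
    · exact haQ t (by omega)
    · exact fun hh => hp.qm (by omega) (by omega) hh.symm
    · exact hbQ t (by omega)
  · -- adj1
    intro t ht
    rcases hcase t (by omega) with ⟨rfl, he⟩ | ⟨h1, h2, he⟩ | ⟨heq, he⟩ <;> rw [he]
    · exact hs.ha
    · have := (hp.adj2 (t := t - 1) (by omega)).symm
      rwa [Nat.sub_add_cancel h1] at this
    · omega
  · -- adj2
    intro t ht
    rcases hcase (t + 1) (by omega) with ⟨h0, he⟩ | ⟨h1, h2, he⟩ | ⟨heq, he⟩ <;> rw [he]
    · omega
    · have := (hp.adj1 (t := t) (by omega)).symm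
      simpa using this
    · have : t = k - 1 := by omega
      rw [this]; exact hs.hb

variable (G)

/-- Rainbow independent set of size `n` drawn from the family restricted to `s`. -/
def Rainbow {ι : Type*} (n : ℕ) (s : Finset ι) (I : ι → Finset V) : Prop :=
  ∃ T : Finset ι, T ⊆ s ∧ T.card = n ∧ ∃ g : {i // i ∈ T} → V,
    (∀ i : {i // i ∈ T}, g i ∈ I i.1) ∧ Function.Injective g ∧
    ∀ i j : {i // i ∈ T}, i ≠ j → ¬ G.Adj (g i) (g j)

variable {G}

/-- Key structural lemma: an independent subset of the closed neighbourhood of the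
x-vertices of an alternating path has at most `k+1` elements, and in the extremal case
it consists of endpoint-extensions plus all midpoints. -/
lemma key (hdeg : ∀ v : V, G.degree v ≤ 2) :
    ∀ k, 1 ≤ k → ∀ q m : ℕ → V, AltP G k q m →
    ∀ S : Finset V, (∀ u ∈ S, ∀ v ∈ S, ¬ G.Adj u v) → (∀ v ∈ S, v ∈ Dset G k q) →
    S.card ≤ k + 1 ∧
    (k + 1 ≤ S.card → ∃ a b, Spec G k q m a b ∧ a ∈ S ∧ b ∈ S ∧
      (∀ t, t < k - 1 → m t ∈ S) ∧ ¬ G.Adj a b) := by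
  classical
  intro k hk
  induction k, hk using Nat.le_induction with
  | base =>
    intro q m hp S hind hsub
    have hmem : ∀ v ∈ S, v = q 0 ∨ G.Adj (q 0) v := by
      intro v hv
      obtain ⟨t, ht, hh⟩ := (mem_Dset G).mp (hsub v hv)
      have : t = 0 := by omega
      subst this
      exact hh
    by_cases hq : q 0 ∈ S
    · have hsub1 : S ⊆ {q 0} := by
        intro v hv
        rcases hmem v hv with rfl | hadj
        · exact Finset.mem_singleton_self _
        · exact absurd hadj (hind _ hq _ hv)
      have hcard : S.card ≤ 1 := le_trans (Finset.card_le_card hsub1) (by simp)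
      refine ⟨?_, fun h => ?_⟩
      · omega
      · omega
    · have hsubN : S ⊆ G.neighborFinset (q 0) := by
        intro v hv
        rcases hmem v hv with rfl | hadj
        · exact absurd hv hq
        · exact (SimpleGraph.mem_neighborFinset G (q 0) v).mpr hadj
      have hcard : S.card ≤ 2 := by
        have := Finset.card_le_card hsubN
        rw [SimpleGraph.card_neighborFinset_eq_degree] at this
        exact le_trans this (hdeg (q 0))
      refine ⟨hcard, fun h => ?_⟩
      obtain ⟨a, haS, b, hbS, hab⟩ := Finset.one_lt_card.mp (show 1 < S.card by omega)
      have haadj : G.Adj (q 0) a := by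
        rcases hmem a haS with rfl | h'
        · exact absurd haS hq
        · exact h'
      have hbadj : G.Adj (q 0) b := by
        rcases hmem b hbS with rfl | h'
        · exact absurd hbS hq
        · exact h'
      exact ⟨a, b, ⟨haadj, by simpa using hbadj, hab, fun hh => absurd hh (by omega),
        fun hh => absurd hh (by omega)⟩, haS, hbS, fun t ht => by omega, hind _ haS _ hbS⟩
  | succ k hk1 IH =>
    intro q m hp S hind hsub
    have hpk : AltP G k q m := hp.mono (by omega)
    set S₁ := S.filter (· ∈ Dset G k q) with hS₁def
    set S₂ := S.filter (· ∉ Dset G k q) with hS₂def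
    have hpart : S₁.card + S₂.card = S.card :=
      Finset.card_filter_add_card_filter_not (s := S) (p := (· ∈ Dset G k q))
    have hS₁sub : S₁ ⊆ S := Finset.filter_subset _ _
    have hS₂sub : S₂ ⊆ S := Finset.filter_subset _ _
    have hind₁ : ∀ u ∈ S₁, ∀ v ∈ S₁, ¬ G.Adj u v := fun u hu v hv =>
      hind u (hS₁sub hu) v (hS₁sub hv)
    obtain ⟨hcard₁, heq₁⟩ := IH q m hpk S₁ hind₁ (fun v hv => (Finset.mem_filter.1 hv).2)
    have hadjk : G.Adj (q k) (m (k - 1)) := by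
      have := (hp.adj2 (t := k - 1) (show k - 1 < k + 1 - 1 by omega)).symm
      have h2 : k - 1 + 1 = k := by omega
      rwa [h2] at this
    have hadjk1 : G.Adj (q (k - 1)) (m (k - 1)) :=
      (hp.adj1 (show k - 1 < k + 1 - 1 by omega)).symm
    have hmkD : m (k - 1) ∈ Dset G k q :=
      (mem_Dset G).mpr ⟨k - 1, by omega, Or.inr hadjk1⟩
    have hS₂elem : ∀ v ∈ S₂, v = q k ∨ (G.Adj (q k) v ∧ v ≠ m (k - 1)) := by
      intro v hv
      have hvD : v ∉ Dset G k q := (Finset.mem_filter.1 hv).2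
      obtain ⟨t, ht, hh⟩ := (mem_Dset G).mp (hsub v (hS₂sub hv))
      have htk : t = k := by
        by_contra hne
        exact hvD ((mem_Dset G).mpr ⟨t, by omega, hh⟩)
      subst htk
      rcases hh with rfl | hadj
      · exact Or.inl rfl
      · refine Or.inr ⟨hadj, fun hh' => hvD ?_⟩
        rw [hh']
        exact hmkD
    have hcard₂ : S₂.card ≤ 1 := by
      refine Finset.card_le_one.mpr (fun a ha b hb => ?_)
      rcases hS₂elem a ha with rfl | ⟨haadj, ham⟩
      · rcases hS₂elem b hb with rfl | ⟨hbadj, hbm⟩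
        · rfl
        · exact absurd hbadj (hind _ (hS₂sub ha) _ (hS₂sub hb))
      · rcases hS₂elem b hb with rfl | ⟨hbadj, hbm⟩
        · exact absurd haadj (hind _ (hS₂sub hb) _ (hS₂sub ha))
        · rcases two_nbrs hdeg hadjk haadj (fun hh => ham hh.symm) hbadj with h1 | h1
          · exact absurd h1 hbm
          · exact h1.symm
    refine ⟨by omega, fun hcard => ?_⟩
    have hc₁ : k + 1 ≤ S₁.card := by omega
    obtain ⟨a, b₁, hspec₁, ha₁, hb₁, hm₁, hnadj₁⟩ := heq₁ hc₁
    -- identify the top end of S₁ and the bottom end A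
    have hAB : ∃ A, A ∈ S₁ ∧ G.Adj (q 0) A ∧ A ≠ m 0 ∧ m (k - 1) ∈ S₁ := by
      by_cases hk2 : 2 ≤ k
      · have hb₁m : b₁ = m (k - 1) := by
          rcases hp.q_nbrs hdeg (t := k - 1) (by omega) (by omega) hspec₁.hb with h1 | h1
          · have h2 : k - 1 - 1 = k - 2 := by omega
            rw [h2] at h1
            exact absurd h1 (hspec₁.hbm (by omega))
          · exact h1
        exact ⟨a, ha₁, hspec₁.ha, hspec₁.ham (by omega), hb₁m ▸ hb₁⟩
      · have hk1' : k = 1 := by omega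
        subst hk1'
        have hm0 : G.Adj (q 0) (m 0) := (hp.adj1 (by omega)).symm
        have hb₁adj : G.Adj (q 0) b₁ := by simpa using hspec₁.hb
        rcases two_nbrs hdeg hspec₁.ha hb₁adj hspec₁.hab hm0 with h1 | h1
        · refine ⟨b₁, hb₁, hb₁adj, fun hh => hspec₁.hab ((hh.trans h1).symm), ?_⟩
          show m (1 - 1) ∈ S₁
          norm_num
          rw [h1]
          exact ha₁
        · refine ⟨a, ha₁, hspec₁.ha, fun hh => hspec₁.hab (hh.trans h1), ?_⟩
          show m (1 - 1) ∈ S₁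
          norm_num
          rw [h1]
          exact hb₁
    obtain ⟨A, hA₁, hAadj, hAm, hmk₁⟩ := hAB
    have hc₂ : S₂.card = 1 := by omega
    obtain ⟨z, hz⟩ := Finset.card_eq_one.mp hc₂
    have hzS₂ : z ∈ S₂ := hz ▸ Finset.mem_singleton_self z
    have hzS : z ∈ S := hS₂sub hzS₂
    have hzadj : G.Adj (q k) z ∧ z ≠ m (k - 1) := by
      rcases hS₂elem z hzS₂ with rfl | h
      · exact absurd hadjk (hind _ hzS _ (hS₁sub hmk₁))
      · exact h
    have hAD : A ∈ Dset G k q := (Finset.mem_filter.1 hA₁).2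
    have hzD : z ∉ Dset G k q := (Finset.mem_filter.1 hzS₂).2
    refine ⟨A, z, ⟨hAadj, by simpa using hzadj.1, fun hh => hzD (hh ▸ hAD), fun _ => hAm,
      fun _ => by simpa using hzadj.2⟩, hS₁sub hA₁, hzS, ?_, hind _ (hS₁sub hA₁) _ hzS⟩
    intro t ht
    by_cases htk : t < k - 1
    · exact hS₁sub (hm₁ t htk)
    · have : t = k - 1 := by omega
      subst this
      exact hS₁sub hmk₁

/-- Uniqueness (as a set) of the endpoint extension. -/
lemma spec_mem (hdeg : ∀ v : V, G.degree v ≤ 2) {k : ℕ} (hk : 1 ≤ k) {q m : ℕ → V}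
    (hp : AltP G k q m) {a b a' b' : V} (h : Spec G k q m a b) (h' : Spec G k q m a' b') :
    (a = a' ∨ a = b') ∧ (b = a' ∨ b = b') := by
  by_cases hk1 : k = 1
  · subst hk1
    have hb : G.Adj (q 0) b := by simpa using h.hb
    have hb' : G.Adj (q 0) b' := by simpa using h'.hb
    constructor
    · exact two_nbrs hdeg h'.ha hb' h'.hab h.ha
    · exact two_nbrs hdeg h'.ha hb' h'.hab hb
  · have hk2 : 2 ≤ k := by omega
    constructor
    · have hm0 : G.Adj (q 0) (m 0) := (hp.adj1 (by omega)).symm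
      rcases two_nbrs hdeg hm0 h'.ha (fun hh => h'.ham (by omega) hh.symm) h.ha with h1 | h1
      · exact absurd h1 (h.ham (by omega))
      · exact Or.inl h1
    · have hmk : G.Adj (q (k - 1)) (m (k - 2)) := by
        have := (hp.adj2 (t := k - 2) (by omega)).symm
        have h2 : k - 2 + 1 = k - 1 := by omega
        rwa [h2] at this
      rcases two_nbrs hdeg hmk h'.hb (fun hh => h'.hbm (by omega) hh.symm) h.hb with h1 | h1
      · exact absurd h1 (h.hbm (by omega))
      · exact Or.inr h1

lemma finish {ι : Type*} [DecidableEq ι] (n k : ℕ) (hn : n ≤ k) (q m : ℕ → V)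
    (hp : AltP G k q m) (s : Finset ι) (I : ι → Finset V)
    (hsup : k ≤ (s.filter (fun i => ∀ t, t < k → q t ∈ I i)).card) :
    Rainbow G n s I := by
  classical
  obtain ⟨T, hTsub, hTcard⟩ :=
    Finset.exists_subset_card_eq (s := s.filter (fun i => ∀ t, t < k → q t ∈ I i)) (le_trans hn hsup)
  have e : {i // i ∈ T} ≃ Fin n :=
    Fintype.equivFinOfCardEq (by rw [Fintype.card_coe]; exact hTcard)
  have hidx : ∀ i : {i // i ∈ T}, ((e i) : ℕ) < k := fun i => lt_of_lt_of_le (e i).isLt hn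
  have hmemsup : ∀ i : {i // i ∈ T}, ∀ t, t < k → q t ∈ I i.1 := by
    intro i t ht
    have := hTsub i.2
    rw [Finset.mem_filter] at this
    exact this.2 t ht
  refine ⟨T, hTsub.trans (Finset.filter_subset _ _), hTcard, fun i => q (e i), ?_, ?_, ?_⟩
  · intro i
    exact hmemsup i _ (hidx i)
  · intro x y hxy
    by_contra hne
    have hexy : ((e x) : ℕ) ≠ ((e y) : ℕ) := by
      intro hh
      exact hne (e.injective (Fin.ext hh))
    exact hp.qne (hidx x) (hidx y) hexy hxy
  · intro x y hne hadj
    have hexy : ((e x) : ℕ) ≠ ((e y) : ℕ) := by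
      intro hh
      exact hne (e.injective (Fin.ext hh))
    exact hp.qnadj (hidx x) (hidx y) hexy hadj

lemma aux {ι : Type*} [DecidableEq ι] (hdeg : ∀ v : V, G.degree v ≤ 2) (n : ℕ)
    (IH : ∀ n', n' < n → ∀ (s : Finset ι) (I : ι → Finset V), 2 * n' - 1 ≤ s.card →
      (∀ i ∈ s, n' ≤ (I i).card) → (∀ i ∈ s, IndepIn G (I i)) → Rainbow G n' s I)
    (s : Finset ι) (I : ι → Finset V) (hs : 2 * n - 1 ≤ s.card)
    (hc : ∀ i ∈ s, n ≤ (I i).card) (hi : ∀ i ∈ s, IndepIn G (I i)) :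
    ∀ (j k : ℕ) (q m : ℕ → V), 1 ≤ k → n ≤ k + j → AltP G k q m →
      k ≤ (s.filter (fun i => ∀ t, t < k → q t ∈ I i)).card → Rainbow G n s I := by
  classical
  intro j
  induction j with
  | zero =>
    intro k q m hk hnk hp hsup
    exact finish n k (by omega) q m hp s I hsup
  | succ j ihj =>
    intro k q m hk hnk hp hsup
    by_cases hkn : n ≤ k
    · exact finish n k hkn q m hp s I hsup
    push_neg at hkn
    set D := Dset G k q with hD
    set Bad := s.filter (fun i => k + 1 ≤ ((I i).filter (· ∈ D)).card) with hBadDef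
    have hindepf : ∀ i ∈ s, ∀ u ∈ (I i).filter (· ∈ D), ∀ v ∈ (I i).filter (· ∈ D),
        ¬ G.Adj u v := fun i his u hu v hv =>
      hi i his u (Finset.filter_subset _ _ hu) v (Finset.filter_subset _ _ hv)
    have hsubD : ∀ i, ∀ v ∈ (I i).filter (· ∈ D), v ∈ Dset G k q := fun i v hv =>
      (Finset.mem_filter.1 hv).2
    by_cases hbc : Bad.card ≤ k
    · -- perform the move
      obtain ⟨Uk, hUsub, hUcard⟩ :=
        Finset.exists_subset_card_eq (s := s.filter (fun i => ∀ t, t < k → q t ∈ I i)) hsup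
      set s' := s \ (Uk ∪ Bad) with hs'Def
      set I' := fun i => (I i).filter (· ∉ D) with hI'Def
      have hscard : 2 * (n - k) - 1 ≤ s'.card := by
        have h1 : s.card - (Uk ∪ Bad).card ≤ s'.card := Finset.le_card_sdiff _ _
        have h2 : (Uk ∪ Bad).card ≤ Uk.card + Bad.card := Finset.card_union_le _ _
        omega
      have hc' : ∀ i ∈ s', n - k ≤ (I' i).card := by
        intro i hi2
        have his : i ∈ s := (Finset.mem_sdiff.1 hi2).1
        have hnb : i ∉ Bad := fun hb =>
          (Finset.mem_sdiff.1 hi2).2 (Finset.mem_union_right _ hb)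
        have hle : ((I i).filter (· ∈ D)).card ≤ k := by
          by_contra hgt
          exact hnb (Finset.mem_filter.mpr ⟨his, by omega⟩)
        have hpart := Finset.card_filter_add_card_filter_not
          (s := I i) (p := (· ∈ D))
        have hci := hc i his
        simp only [hI'Def]
        omega
      have hi2' : ∀ i ∈ s', IndepIn G (I' i) := by
        intro i hi2 u hu v hv
        exact hi i (Finset.mem_sdiff.1 hi2).1 u (Finset.filter_subset _ _ hu) v
          (Finset.filter_subset _ _ hv)
      obtain ⟨T', hT's, hT'card, g', hmem', hinj', hnadj'⟩ :=
        IH (n - k) (by omega) s' I' hscard hc' hi2'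
      have hdisj : Disjoint T' Uk := by
        rw [Finset.disjoint_left]
        intro i hiT' hiU
        exact (Finset.mem_sdiff.1 (hT's hiT')).2 (Finset.mem_union_left _ hiU)
      have eU : {i // i ∈ Uk} ≃ Fin k :=
        Fintype.equivFinOfCardEq (by rw [Fintype.card_coe]; exact hUcard)
      refine ⟨T' ∪ Uk, ?_, ?_, ?_⟩
      · intro i hiT
        rcases Finset.mem_union.1 hiT with h | h
        · exact (Finset.mem_sdiff.1 (hT's h)).1
        · exact Finset.mem_of_mem_filter i (hUsub h)
      · rw [Finset.card_union_of_disjoint hdisj, hT'card, hUcard]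
        omega
      · have hmemT' : ∀ i : {i // i ∈ T' ∪ Uk}, i.1 ∉ Uk → i.1 ∈ T' := by
          intro i h
          rcases Finset.mem_union.1 i.2 with h' | h'
          · exact h'
          · exact absurd h' h
        refine ⟨fun i => if h : i.1 ∈ Uk then q (eU ⟨i.1, h⟩) else g' ⟨i.1, hmemT' i h⟩,
          ?_, ?_, ?_⟩
        · intro i
          by_cases h : i.1 ∈ Uk
          · simp only [h, dif_pos]
            have := (Finset.mem_filter.1 (hUsub h)).2
            exact this _ (eU ⟨i.1, h⟩).isLt
          · simp only [h, dif_neg, not_false_iff]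
            exact Finset.filter_subset _ _ (hmem' ⟨i.1, hmemT' i h⟩)
        · intro x y hxy
          by_cases hx : x.1 ∈ Uk <;> by_cases hy : y.1 ∈ Uk <;>
            simp only [hx, hy, dif_pos, dif_neg, not_false_iff] at hxy
          · by_cases hne : ((eU ⟨x.1, hx⟩) : ℕ) = ((eU ⟨y.1, hy⟩) : ℕ)
            · have := eU.injective (Fin.ext hne)
              have h3 := congrArg Subtype.val this
              exact Subtype.ext h3
            · exact absurd hxy (hp.qne (eU ⟨x.1, hx⟩).isLt (eU ⟨y.1, hy⟩).isLt hne)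
          · exfalso
            have h1 : q ((eU ⟨x.1, hx⟩) : ℕ) ∈ D :=
              (mem_Dset G).mpr ⟨_, (eU ⟨x.1, hx⟩).isLt, Or.inl rfl⟩
            have h2 := (Finset.mem_filter.1 (hmem' ⟨y.1, hmemT' y hy⟩)).2
            rw [← hxy] at h2
            exact h2 h1
          · exfalso
            have h1 : q ((eU ⟨y.1, hy⟩) : ℕ) ∈ D :=
              (mem_Dset G).mpr ⟨_, (eU ⟨y.1, hy⟩).isLt, Or.inl rfl⟩
            have h2 := (Finset.mem_filter.1 (hmem' ⟨x.1, hmemT' x hx⟩)).2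
            rw [hxy] at h2
            exact h2 h1
          · have := hinj' hxy
            have h3 := congrArg Subtype.val this
            exact Subtype.ext h3
        · intro x y hne
          by_cases hx : x.1 ∈ Uk <;> by_cases hy : y.1 ∈ Uk <;>
            simp only [hx, hy, dif_pos, dif_neg, not_false_iff]
          · have hxyne : ((eU ⟨x.1, hx⟩) : ℕ) ≠ ((eU ⟨y.1, hy⟩) : ℕ) := by
              intro hh
              have := eU.injective (Fin.ext hh)
              have h3 := congrArg Subtype.val this
              exact hne (Subtype.ext h3)
            exact hp.qnadj (eU ⟨x.1, hx⟩).isLt (eU ⟨y.1, hy⟩).isLt hxyne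
          · intro hadj
            have h2 := (Finset.mem_filter.1 (hmem' ⟨y.1, hmemT' y hy⟩)).2
            exact h2 ((mem_Dset G).mpr ⟨_, (eU ⟨x.1, hx⟩).isLt, Or.inr hadj⟩)
          · intro hadj
            have h2 := (Finset.mem_filter.1 (hmem' ⟨x.1, hmemT' x hx⟩)).2
            exact h2 ((mem_Dset G).mpr ⟨_, (eU ⟨y.1, hy⟩).isLt, Or.inr hadj.symm⟩)
          · refine hnadj' _ _ (fun hh => hne ?_)
            have h3 := congrArg Subtype.val hh
            exact Subtype.ext h3
    · -- extension to a longer alternating path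
      push_neg at hbc
      have hBadne : Bad.Nonempty := Finset.card_pos.mp (by omega)
      obtain ⟨i₀, hi₀⟩ := hBadne
      have hi₀s : i₀ ∈ s := Finset.mem_of_mem_filter i₀ hi₀
      obtain ⟨a, b, hspec, ha, hb, hm, hnadjab⟩ :=
        (key hdeg k hk q m hp _ (hindepf i₀ hi₀s) (hsubD i₀)).2 (Finset.mem_filter.1 hi₀).2
      have hP2 : AltP G (k + 1) (ext k m a b) q := ext_altp hdeg hk hp hspec hnadjab
      have hsub2 : Bad ⊆ s.filter (fun i => ∀ t, t < k + 1 → ext k m a b t ∈ I i) := by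
        intro i hiB
        have his : i ∈ s := Finset.mem_of_mem_filter i hiB
        obtain ⟨a', b', hspec', ha', hb', hm', hx⟩ :=
          (key hdeg k hk q m hp _ (hindepf i his) (hsubD i)).2 (Finset.mem_filter.1 hiB).2
        have hmm := spec_mem hdeg hk hp hspec hspec'
        refine Finset.mem_filter.mpr ⟨his, ?_⟩
        intro t ht
        rcases ext_cases hk m a b ht with ⟨rfl, he⟩ | ⟨h1, h2, he⟩ | ⟨rfl, he⟩ <;> rw [he]
        · rcases hmm.1 with rfl | rfl
          · exact Finset.filter_subset _ _ ha'
          · exact Finset.filter_subset _ _ hb'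
        · exact Finset.filter_subset _ _ (hm' (t - 1) (by omega))
        · rcases hmm.2 with rfl | rfl
          · exact Finset.filter_subset _ _ ha'
          · exact Finset.filter_subset _ _ hb'
      have hsup2 : k + 1 ≤ (s.filter (fun i => ∀ t, t < k + 1 → ext k m a b t ∈ I i)).card :=
        le_trans (by omega) (Finset.card_le_card hsub2)
      exact ihj (k + 1) (ext k m a b) q (by omega) (by omega) hP2 hsup2

lemma ML {ι : Type*} [DecidableEq ι] (hdeg : ∀ v : V, G.degree v ≤ 2) :
    ∀ (n : ℕ) (s : Finset ι) (I : ι → Finset V), 2 * n - 1 ≤ s.card →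
      (∀ i ∈ s, n ≤ (I i).card) → (∀ i ∈ s, IndepIn G (I i)) → Rainbow G n s I := by
  intro n
  induction n using Nat.strong_induction_on with
  | _ n IHn =>
    intro s I hs hc hi
    rcases Nat.eq_zero_or_pos n with rfl | hn
    · exact ⟨∅, Finset.empty_subset s, Finset.card_empty,
        fun i => absurd i.2 (Finset.notMem_empty i.1),
        fun i => absurd i.2 (Finset.notMem_empty i.1),
        fun x y _ => absurd x.2 (Finset.notMem_empty x.1),
        fun x y _ => absurd x.2 (Finset.notMem_empty x.1)⟩
    · have hsne : s.Nonempty := Finset.card_pos.mp (by omega)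
      obtain ⟨i₀, hi₀⟩ := hsne
      have hIne : (I i₀).Nonempty := Finset.card_pos.mp (by have := hc i₀ hi₀; omega)
      obtain ⟨v₀, hv₀⟩ := hIne
      have hP : AltP G 1 (fun _ => v₀) (fun _ => v₀) :=
        ⟨fun s hs t ht hst => by omega, fun s hs t ht hst => by omega,
         fun s hs t ht hst => by omega, fun s hs t ht => by omega,
         fun t ht => by omega, fun t ht => by omega⟩
      have hsup : 1 ≤ (s.filter (fun i => ∀ t, t < 1 → v₀ ∈ I i)).card := by
        refine Finset.card_pos.mpr ⟨i₀, Finset.mem_filter.mpr ⟨hi₀, fun t _ => hv₀⟩⟩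
      exact aux hdeg n (fun n' hn' => IHn n' hn') s I hs hc hi (n - 1) 1
        (fun _ => v₀) (fun _ => v₀) le_rfl (by omega) hP hsup

end RainbowAux

theorem maxDegree_two_rainbow {V : Type*} [Fintype V] (G : SimpleGraph V)
    [DecidableRel G.Adj] (hdeg : ∀ v : V, G.degree v ≤ 2)
    (n : ℕ) (I : Fin (2 * n - 1) → Finset V)
    (hI : ∀ i, (I i).card = n ∧ IndepIn G (I i)) :
    HasRainbowIndep G I n := by
  classical
  obtain ⟨T, hTs, hTcard, g, hmem, hinj, hnadj⟩ :=
    RainbowAux.ML hdeg n Finset.univ I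
      (by simp) (fun i _ => (hI i).1.ge) (fun i _ => (hI i).2)
  have e : {i // i ∈ T} ≃ Fin n :=
    Fintype.equivFinOfCardEq (by rw [Fintype.card_coe]; exact hTcard)
  refine ⟨fun i => (e.symm i).1, fun i => g (e.symm i), ?_, ?_, ?_, ?_⟩
  · intro x y h
    exact e.symm.injective (Subtype.ext h)
  · intro x y h
    exact e.symm.injective (hinj h)
  · intro i
    exact hmem (e.symm i)
  · intro i i' h
    exact hnadj _ _ (fun hc => h (by rw [← e.apply_symm_apply i, ← e.apply_symm_apply i', hc]))
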